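/- Let p be a prime number and D = ⋃_{n≥0} ℚ[X^{1/p^n}, X^{-1/p^n}]. Then for each integer d ≥ 1: (1) p divides d if and only if the d-th cyclotomic polynomial Φ_d(X) is a prime element of D; (2) if p does not divide d, then Φ_d(X) is contained in countably infinitely many maximal ideals of D. -/

import Mathlib

set_option synthInstance.maxHeartbeats 1000000
set_option maxHeartbeats 1000000

open Polynomial AddMonoidAlgebra

noncomputable section

/-- The subgroup of `ℚ` generated by `{1/pⁿ : n ∈ ℕ}`. -/
def expGroup (p : ℕ) : AddSubgroup ℚ :=
  AddSubgroup.closure (Set.range fun n : ℕ => ((p : ℚ) ^ n)⁻¹)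

instance (p : ℕ) : UniqueSums (expGroup p) :=
  UniqueSums.of_injective_addHom ((expGroup p).subtype : _ →+ ℚ).toAddHom
    Subtype.val_injective inferInstance

/-- `D = ⋃_{n≥0} F[X^{1/pⁿ}, X^{-1/pⁿ}]`, realized as the group algebra `F[X;G]`
where `G` is the subgroup of `ℚ` generated by `{1/pⁿ : n ≥ 0}`. -/
abbrev LaurentUnion (F : Type*) [Field F] (p : ℕ) : Type _ :=
  AddMonoidAlgebra F (expGroup p)

instance (F : Type*) [Field F] (p : ℕ) : IsDomain (LaurentUnion F p) :=
  NoZeroDivisors.to_isDomain _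

/-- The element `1/pⁿ` of the subgroup `G`. -/
def expGen (p n : ℕ) : expGroup p :=
  ⟨((p : ℚ) ^ n)⁻¹, AddSubgroup.subset_closure ⟨n, rfl⟩⟩

/-- The monomial `X^{1/pⁿ}` in `D`. -/
def XRoot (F : Type*) [Field F] (p n : ℕ) : LaurentUnion F p :=
  AddMonoidAlgebra.single (expGen p n) 1

/-- The subring `Dₙ = F[X^{1/pⁿ}, X^{-1/pⁿ}]` of `D`, as a subalgebra. -/
def DSub (F : Type*) [Field F] (p n : ℕ) : Subalgebra F (LaurentUnion F p) :=
  Algebra.adjoin F {XRoot F p n, AddMonoidAlgebra.single (-expGen p n) 1}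

/-- The subring `Rₙ = F[X^{1/pⁿ}]` of `D`, as a subalgebra. -/
def RSub (F : Type*) [Field F] (p n : ℕ) : Subalgebra F (LaurentUnion F p) :=
  Algebra.adjoin F {XRoot F p n}

lemma XRoot_mem_DSub (F : Type*) [Field F] (p n : ℕ) : XRoot F p n ∈ DSub F p n :=
  Algebra.subset_adjoin (by simp)

lemma aeval_XRoot_mem_DSub (F : Type*) [Field F] (p n : ℕ) (f : Polynomial F) :
    Polynomial.aeval (XRoot F p n) f ∈ DSub F p n :=
  Algebra.adjoin_le (Set.singleton_subset_iff.mpr (XRoot_mem_DSub F p n))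
    (Polynomial.aeval_mem_adjoin_singleton _ _)

lemma aeval_XRoot_mem_RSub (F : Type*) [Field F] (p n : ℕ) (f : Polynomial F) :
    Polynomial.aeval (XRoot F p n) f ∈ RSub F p n :=
  Polynomial.aeval_mem_adjoin_singleton _ _

lemma XRoot_pow (F : Type*) [Field F] {p : ℕ} (hp : p ≠ 0) {m n : ℕ} (h : m ≤ n) :
    XRoot F p n ^ p ^ (n - m) = XRoot F p m := by
  rw [XRoot, XRoot, AddMonoidAlgebra.single_pow, one_pow]
  congr 1
  ext
  have hp' : (p : ℚ) ≠ 0 := Nat.cast_ne_zero.mpr hp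
  push_cast
  rw [nsmul_eq_mul]
  push_cast [expGen]
  field_simp
  rw [← pow_add, Nat.sub_add_cancel h]

lemma DSub_mono (F : Type*) [Field F] {p : ℕ} (hp : p ≠ 0) {m n : ℕ} (h : m ≤ n) :
    DSub F p m ≤ DSub F p n := by
  apply Algebra.adjoin_le
  rintro x (rfl | rfl)
  · rw [← XRoot_pow F hp h]
    exact pow_mem (Algebra.subset_adjoin (by simp)) _
  · rw [show (AddMonoidAlgebra.single (-expGen p m) 1 : LaurentUnion F p)
        = (AddMonoidAlgebra.single (-expGen p n) 1 : LaurentUnion F p) ^ p ^ (n - m) from ?_]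
    · exact pow_mem (Algebra.subset_adjoin (by simp)) _
    · rw [AddMonoidAlgebra.single_pow, one_pow]
      congr 1
      ext
      have hp' : (p : ℚ) ≠ 0 := Nat.cast_ne_zero.mpr hp
      push_cast
      rw [nsmul_eq_mul]
      push_cast [expGen]
      field_simp
      rw [← pow_add, Nat.add_sub_of_le h]

/-! ### Auxiliary infrastructure -/

section Infra

open LaurentPolynomial in
lemma expGen_coe (p n : ℕ) : ((expGen p n : expGroup p) : ℚ) = ((p : ℚ) ^ n)⁻¹ := rfl

/-- `z ↦ z • (1/pⁿ)` as an additive hom `ℤ →+ expGroup p`. -/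
def expMap (p n : ℕ) : ℤ →+ expGroup p := zmultiplesHom _ (expGen p n)

lemma expMap_coe (p n : ℕ) (z : ℤ) :
    ((expMap p n z : expGroup p) : ℚ) = (z : ℚ) * ((p : ℚ) ^ n)⁻¹ := by
  simp [expMap, zmultiplesHom_apply, expGen_coe]

lemma expMap_injective {p : ℕ} (hp : p ≠ 0) (n : ℕ) : Function.Injective (expMap p n) := by
  intro a b h
  have h' := congrArg (Subtype.val) h
  rw [expMap_coe, expMap_coe] at h'
  have hpn : ((p : ℚ) ^ n)⁻¹ ≠ 0 := by
    simp [pow_ne_zero, Nat.cast_ne_zero.mpr hp]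
  exact_mod_cast mul_right_cancel₀ hpn h'

/-- The level-`n` embedding `ℚ[T,T⁻¹] → D`, `T ↦ X^{1/pⁿ}`. -/
def psi (p n : ℕ) : LaurentPolynomial ℚ →ₐ[ℚ] LaurentUnion ℚ p :=
  AddMonoidAlgebra.mapDomainAlgHom ℚ ℚ (expMap p n)

lemma psi_apply (p n : ℕ) (x : LaurentPolynomial ℚ) :
    psi p n x = AddMonoidAlgebra.mapDomain (expMap p n) x := by simp [psi]

lemma psi_injective {p : ℕ} (hp : p ≠ 0) (n : ℕ) : Function.Injective (psi p n) := by
  intro a b h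
  rw [psi_apply, psi_apply] at h
  exact AddMonoidAlgebra.mapDomain_injective (expMap_injective hp n) h

lemma psi_toLaurent (p n : ℕ) (g : Polynomial ℚ) :
    psi p n (Polynomial.toLaurent g) = Polynomial.aeval (XRoot ℚ p n) g := by
  have h : (psi p n).comp Polynomial.toLaurentAlg = Polynomial.aeval (XRoot ℚ p n) := by
    apply Polynomial.algHom_ext
    simp only [AlgHom.comp_apply, Polynomial.toLaurentAlg_apply, Polynomial.toLaurent_X,
      Polynomial.aeval_X]
    show AddMonoidAlgebra.mapDomain (expMap p n) (AddMonoidAlgebra.single (1 : ℤ) (1 : ℚ)) = XRoot ℚ p n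
    rw [AddMonoidAlgebra.mapDomain_single]
    show AddMonoidAlgebra.single (expMap p n 1) 1 = _
    rw [show expMap p n 1 = expGen p n from one_zsmul _]
    rfl
  have := DFunLike.congr_fun h g
  simpa [Polynomial.toLaurentAlg_apply] using this

lemma smul_expGen {p : ℕ} (hp : p ≠ 0) {m n : ℕ} (h : m ≤ n) :
    ((p : ℤ) ^ (n - m)) • expGen p n = expGen p m := by
  have hp' : (p : ℚ) ≠ 0 := Nat.cast_ne_zero.mpr hp
  ext
  push_cast
  rw [zsmul_eq_mul]
  push_cast [expGen]
  field_simp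
  rw [← pow_add, Nat.sub_add_cancel h]

lemma expMap_mul_pow {p : ℕ} (hp : p ≠ 0) {m n : ℕ} (h : m ≤ n) (z : ℤ) :
    expMap p n (z * (p : ℤ) ^ (n - m)) = expMap p m z := by
  simp only [expMap, zmultiplesHom_apply, mul_zsmul, smul_expGen hp h]

lemma psi_range_mono {p : ℕ} (hp : p ≠ 0) {m n : ℕ} (h : m ≤ n) :
    Set.range (psi p m) ⊆ Set.range (psi p n) := by
  rintro _ ⟨y, rfl⟩
  refine ⟨AddMonoidAlgebra.mapDomain (fun z : ℤ => z * (p : ℤ) ^ (n - m)) y, ?_⟩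
  rw [psi_apply, psi_apply]
  apply AddMonoidAlgebra.coeff_injective
  show Finsupp.mapDomain _ (Finsupp.mapDomain _ y.coeff) = Finsupp.mapDomain _ y.coeff
  rw [← Finsupp.mapDomain_comp]
  exact Finsupp.mapDomain_congr fun a _ => expMap_mul_pow hp h a

lemma exists_level {p : ℕ} (hp : p ≠ 0) (q : ℚ) (hq : q ∈ expGroup p) :
    ∃ (n : ℕ) (z : ℤ), (z : ℚ) * ((p : ℚ) ^ n)⁻¹ = q := by
  have hp' : (p : ℚ) ≠ 0 := Nat.cast_ne_zero.mpr hp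
  induction hq using AddSubgroup.closure_induction with
  | mem x hx =>
    obtain ⟨n, rfl⟩ := hx
    exact ⟨n, 1, by simp⟩
  | zero => exact ⟨0, 0, by simp⟩
  | add x y hx hy ihx ihy =>
    obtain ⟨n1, z1, hz1⟩ := ihx
    obtain ⟨n2, z2, hz2⟩ := ihy
    refine ⟨n1 + n2, z1 * p ^ n2 + z2 * p ^ n1, ?_⟩
    have h1 : ((p : ℚ) ^ n1) ≠ 0 := pow_ne_zero _ hp'
    have h2 : ((p : ℚ) ^ n2) ≠ 0 := pow_ne_zero _ hp'
    rw [← hz1, ← hz2]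
    push_cast
    rw [pow_add, mul_inv]
    field_simp
  | neg x hx ihx =>
    obtain ⟨n, z, hz⟩ := ihx
    exact ⟨n, -z, by rw [← hz]; push_cast; ring⟩

lemma exists_mem_psi_range {p : ℕ} (hp : p ≠ 0) (x : LaurentUnion ℚ p) :
    ∃ n, x ∈ Set.range (psi p n) := by
  induction x using AddMonoidAlgebra.induction with
  | zero => exact ⟨0, 0, map_zero _⟩
  | single_add a b f _ _ ih =>
    obtain ⟨n1, hn1⟩ := ih
    obtain ⟨n2, z, hz⟩ := exists_level hp (a : ℚ) a.2
    refine ⟨max n1 n2, ?_⟩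
    have h1 : (f : LaurentUnion ℚ p) ∈ Set.range (psi p (max n1 n2)) :=
      psi_range_mono hp (le_max_left _ _) hn1
    have h2 : (AddMonoidAlgebra.single a b : LaurentUnion ℚ p) ∈ Set.range (psi p (max n1 n2)) := by
      apply psi_range_mono hp (le_max_right _ _)
      refine ⟨AddMonoidAlgebra.single z b, ?_⟩
      rw [psi_apply, AddMonoidAlgebra.mapDomain_single]
      congr 1
      ext
      rw [expMap_coe]
      exact hz
    obtain ⟨y1, hy1⟩ := h1
    obtain ⟨y2, hy2⟩ := h2
    exact ⟨y2 + y1, by rw [map_add, hy1, hy2]⟩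

end Infra

/-! ### Facts about `ℚ[T,T⁻¹]` -/

section Laurent

instance : IsDomain (LaurentPolynomial ℚ) := NoZeroDivisors.to_isDomain _

instance : IsPrincipalIdealRing (LaurentPolynomial ℚ) := by
  haveI := LaurentPolynomial.isLocalization (R := ℚ)
  constructor
  intro J
  obtain ⟨g, hg⟩ := (IsPrincipalIdealRing.principal
    (Ideal.comap (algebraMap (Polynomial ℚ) (LaurentPolynomial ℚ)) J)).principal
  refine ⟨⟨Polynomial.toLaurent g, ?_⟩⟩
  conv_lhs => rw [← IsLocalization.map_comap (Submonoid.powers (Polynomial.X (R := ℚ)))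
    (LaurentPolynomial ℚ) J]
  rw [show Ideal.under (Polynomial ℚ) J = _ from hg]
  show Ideal.map (algebraMap (Polynomial ℚ) (LaurentPolynomial ℚ)) (Ideal.span {g}) = _
  rw [Ideal.map_span, Set.image_singleton, LaurentPolynomial.algebraMap_eq_toLaurent]

lemma cyclotomic_prime_rat {m : ℕ} (hm : m ≠ 0) : Prime (Polynomial.cyclotomic m ℚ) :=
  UniqueFactorizationMonoid.irreducible_iff_prime.mp
    (Polynomial.cyclotomic.irreducible_rat (Nat.pos_of_ne_zero hm))

lemma coeff_zero_cyclotomic_ne {m : ℕ} (hm : m ≠ 0) : (Polynomial.cyclotomic m ℚ).coeff 0 ≠ 0 := by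
  rcases eq_or_lt_of_le (Nat.one_le_iff_ne_zero.mpr hm) with h | h
  · rw [← h, Polynomial.cyclotomic_one]
    simp
  · rw [Polynomial.cyclotomic_coeff_zero ℚ h]
    exact one_ne_zero

lemma natDegree_cyclotomic_pos {m : ℕ} (hm : m ≠ 0) : 0 < (Polynomial.cyclotomic m ℚ).natDegree := by
  rw [Polynomial.natDegree_cyclotomic]
  exact Nat.totient_pos.mpr (Nat.pos_of_ne_zero hm)

lemma not_dvd_X_pow {g : Polynomial ℚ} (h0 : g.coeff 0 ≠ 0) (hdeg : 0 < g.natDegree) (k : ℕ) :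
    ¬ g ∣ Polynomial.X ^ k := by
  intro hdvd
  obtain ⟨i, _, hassoc⟩ := (dvd_prime_pow Polynomial.prime_X k).mp hdvd
  rcases Nat.eq_zero_or_pos i with rfl | hipos
  · rw [pow_zero] at hassoc
    have hu : IsUnit g := associated_one_iff_isUnit.mp hassoc
    rw [Polynomial.natDegree_eq_zero_of_isUnit hu] at hdeg
    exact lt_irrefl _ hdeg
  · have hXd : Polynomial.X ∣ g := (dvd_pow_self _ hipos.ne').trans hassoc.symm.dvd
    rw [Polynomial.X_dvd_iff] at hXd
    exact h0 hXd

lemma prime_toLaurent {g : Polynomial ℚ} (hpr : Prime g) (h0 : g.coeff 0 ≠ 0)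
    (hdeg : 0 < g.natDegree) : Prime (Polynomial.toLaurent g) := by
  haveI := LaurentPolynomial.isLocalization (R := ℚ)
  have hne : g ≠ 0 := hpr.ne_zero
  have hprime : (Ideal.span {g}).IsPrime := (Ideal.span_singleton_prime hne).mpr hpr
  have hdisj : Disjoint ((Submonoid.powers (Polynomial.X : Polynomial ℚ)) : Set (Polynomial ℚ))
      ((Ideal.span {g} : Ideal (Polynomial ℚ)) : Set (Polynomial ℚ)) := by
    rw [Set.disjoint_left]
    rintro x ⟨k, rfl⟩ hx
    exact not_dvd_X_pow h0 hdeg k (Ideal.mem_span_singleton.mp hx)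
  have hmapped := IsLocalization.isPrime_of_isPrime_disjoint
    (Submonoid.powers (Polynomial.X (R := ℚ))) (LaurentPolynomial ℚ) _ hprime hdisj
  rw [Ideal.map_span, Set.image_singleton, LaurentPolynomial.algebraMap_eq_toLaurent] at hmapped
  have hne' : Polynomial.toLaurent g ≠ 0 := by
    simpa using hne
  exact (Ideal.span_singleton_prime hne').mp hmapped

lemma prime_toLaurent_cyclotomic {m : ℕ} (hm : m ≠ 0) :
    Prime (Polynomial.toLaurent (Polynomial.cyclotomic m ℚ)) :=
  prime_toLaurent (cyclotomic_prime_rat hm) (coeff_zero_cyclotomic_ne hm)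
    (natDegree_cyclotomic_pos hm)

lemma span_toLaurent_cyclotomic_isMaximal {m : ℕ} (hm : m ≠ 0) :
    (Ideal.span {Polynomial.toLaurent (Polynomial.cyclotomic m ℚ)}).IsMaximal := by
  have hpr := prime_toLaurent_cyclotomic hm
  haveI : (Ideal.span {Polynomial.toLaurent (Polynomial.cyclotomic m ℚ)}).IsPrime :=
    (Ideal.span_singleton_prime hpr.ne_zero).mpr hpr
  exact IsPrime.to_maximal_ideal (by
    rw [Ne, Ideal.span_singleton_eq_bot]
    exact hpr.ne_zero :
    (Ideal.span {Polynomial.toLaurent (Polynomial.cyclotomic m ℚ)}) ≠ ⊥)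

end Laurent

/-! ### Cyclotomic towers and primality in `D` -/

section Tower

lemma expand_pow_cyclotomic {p : ℕ} (hp : p.Prime) {m : ℕ} (hm : p ∣ m) (k : ℕ) :
    Polynomial.expand ℚ (p ^ k) (Polynomial.cyclotomic m ℚ) =
      Polynomial.cyclotomic (m * p ^ k) ℚ := by
  induction k with
  | zero => simp
  | succ k ih =>
    rw [pow_succ', ← Polynomial.expand_expand, ih,
      Polynomial.cyclotomic_expand_eq_cyclotomic hp (hm.mul_right _)]
    ring_nf

lemma expand_pow_cyclotomic_prod {p : ℕ} (hp : p.Prime) {d : ℕ} (hd : ¬ p ∣ d) (n : ℕ) :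
    Polynomial.expand ℚ (p ^ n) (Polynomial.cyclotomic d ℚ) =
      ∏ k ∈ Finset.range (n + 1), Polynomial.cyclotomic (d * p ^ k) ℚ := by
  induction n with
  | zero => simp
  | succ n ih =>
    rw [pow_succ, ← Polynomial.expand_expand,
      Polynomial.cyclotomic_expand_eq_cyclotomic_mul hp hd, map_mul, ih,
      expand_pow_cyclotomic hp (dvd_mul_left p d), Finset.prod_range_succ]
    have h2 : d * p * p ^ n = d * p ^ (n + 1) := by ring
    rw [h2]
    rw [Finset.prod_range_succ (fun k => Polynomial.cyclotomic (d * p ^ k) ℚ) (n + 1)]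
    rw [Finset.prod_range_succ (fun k => Polynomial.cyclotomic (d * p ^ k) ℚ) n]
    ring

lemma aeval_shift {p : ℕ} (hp : p ≠ 0) {m n : ℕ} (h : m ≤ n) (g : Polynomial ℚ) :
    Polynomial.aeval (XRoot ℚ p m) g =
      Polynomial.aeval (XRoot ℚ p n) (Polynomial.expand ℚ (p ^ (n - m)) g) := by
  rw [Polynomial.expand_aeval, XRoot_pow ℚ hp h]

lemma not_isUnit_aeval_XRoot {p : ℕ} (hp : p.Prime) {g : Polynomial ℚ} (h0 : g.coeff 0 ≠ 0)
    (hdeg : 0 < g.natDegree) (n : ℕ) : ¬ IsUnit (Polynomial.aeval (XRoot ℚ p n) g) := by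
  intro hu
  haveI := LaurentPolynomial.isLocalization (R := ℚ)
  have hp0 : p ≠ 0 := hp.ne_zero
  obtain ⟨u, hu⟩ := hu
  obtain ⟨N1, hmem⟩ := exists_mem_psi_range hp0 ((u⁻¹ : (LaurentUnion ℚ p)ˣ) : LaurentUnion ℚ p)
  set N := max n N1 with hN
  set g' := Polynomial.expand ℚ (p ^ (N - n)) g with hg'
  have hrepr : Polynomial.aeval (XRoot ℚ p n) g = psi p N (Polynomial.toLaurent g') := by
    rw [psi_toLaurent, ← aeval_shift hp0 (le_max_left _ _)]
  obtain ⟨y, hy⟩ := psi_range_mono hp0 (le_max_right n N1) hmem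
  have hmul : psi p N (Polynomial.toLaurent g' * y) = psi p N 1 := by
    rw [map_mul, map_one, hy, ← hrepr, ← hu, Units.mul_inv]
  have h1 : Polynomial.toLaurent g' * y = 1 := psi_injective hp0 N hmul
  obtain ⟨v, hv⟩ := IsUnit.of_mul_eq_one _ h1
  obtain ⟨⟨a, s⟩, hs⟩ := IsLocalization.surj (Submonoid.powers (Polynomial.X (R := ℚ)))
    ((v⁻¹ : (LaurentPolynomial ℚ)ˣ) : LaurentPolynomial ℚ)
  obtain ⟨k, hk⟩ := s.2
  have h2 : Polynomial.toLaurent (g' * a) = Polynomial.toLaurent (Polynomial.X ^ k) := by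
    rw [map_mul]
    calc Polynomial.toLaurent g' * Polynomial.toLaurent a
        = Polynomial.toLaurent g' * (((v⁻¹ : (LaurentPolynomial ℚ)ˣ) : LaurentPolynomial ℚ) *
          algebraMap (Polynomial ℚ) (LaurentPolynomial ℚ) (s : Polynomial ℚ)) := by
          rw [hs, LaurentPolynomial.algebraMap_eq_toLaurent]
      _ = (Polynomial.toLaurent g' * ((v⁻¹ : (LaurentPolynomial ℚ)ˣ) : LaurentPolynomial ℚ)) *
          algebraMap (Polynomial ℚ) (LaurentPolynomial ℚ) (s : Polynomial ℚ) := by ring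
      _ = Polynomial.toLaurent ((s : Polynomial ℚ)) := by
          rw [← hv, Units.mul_inv, one_mul, LaurentPolynomial.algebraMap_eq_toLaurent]
      _ = Polynomial.toLaurent (Polynomial.X ^ k) := congrArg Polynomial.toLaurent hk.symm
  have h3 : g' * a = Polynomial.X ^ k := Polynomial.toLaurent_injective h2
  have h0' : g'.coeff 0 ≠ 0 := by
    rw [hg', Polynomial.coeff_expand (pow_pos hp.pos _)]
    simpa using h0
  have hdeg' : 0 < g'.natDegree := by
    rw [hg', Polynomial.natDegree_expand]
    exact mul_pos hdeg (pow_pos hp.pos _)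
  exact not_dvd_X_pow h0' hdeg' k ⟨a, h3.symm⟩

lemma prime_aeval_XRoot_cyclotomic {p : ℕ} (hp : p.Prime) {m : ℕ} (hm0 : m ≠ 0) (hm : p ∣ m)
    (n : ℕ) : Prime (Polynomial.aeval (XRoot ℚ p n) (Polynomial.cyclotomic m ℚ)) := by
  have hp0 : p ≠ 0 := hp.ne_zero
  refine ⟨?_, ?_, ?_⟩
  · rw [← psi_toLaurent]
    intro h
    have h2 : Polynomial.toLaurent (Polynomial.cyclotomic m ℚ) = 0 :=
      psi_injective hp0 n (by simpa using h)
    exact Polynomial.cyclotomic_ne_zero m ℚ (Polynomial.toLaurent_injective (by simpa using h2))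
  · exact not_isUnit_aeval_XRoot hp (coeff_zero_cyclotomic_ne hm0) (natDegree_cyclotomic_pos hm0) n
  · rintro a b ⟨c, hc⟩
    obtain ⟨Na, hma⟩ := exists_mem_psi_range hp0 a
    obtain ⟨Nb, hmb⟩ := exists_mem_psi_range hp0 b
    obtain ⟨Nc, hmc⟩ := exists_mem_psi_range hp0 c
    set N := max (max Na Nb) (max Nc n) with hNdef
    have hnN : n ≤ N := le_trans (le_max_right Nc n) (le_max_right _ _)
    obtain ⟨a', ha'⟩ := psi_range_mono hp0 (le_trans (le_max_left Na Nb) (le_max_left _ _)) hma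
    obtain ⟨b', hb'⟩ := psi_range_mono hp0 (le_trans (le_max_right Na Nb) (le_max_left _ _)) hmb
    obtain ⟨c', hc'⟩ := psi_range_mono hp0 (le_trans (le_max_left Nc n) (le_max_right _ _)) hmc
    set m' := m * p ^ (N - n) with hm'def
    have hm'0 : m' ≠ 0 := mul_ne_zero hm0 (pow_ne_zero _ hp0)
    have hπ : Polynomial.aeval (XRoot ℚ p n) (Polynomial.cyclotomic m ℚ) =
        psi p N (Polynomial.toLaurent (Polynomial.cyclotomic m' ℚ)) := by
      rw [aeval_shift hp0 hnN, expand_pow_cyclotomic hp hm, psi_toLaurent]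
    have key : a' * b' = Polynomial.toLaurent (Polynomial.cyclotomic m' ℚ) * c' := by
      apply psi_injective hp0 N
      rw [map_mul, map_mul, ha', hb', hc', ← hπ]
      exact hc
    have hpr := prime_toLaurent_cyclotomic hm'0
    rcases hpr.2.2 a' b' ⟨c', key⟩ with h | h
    · left
      obtain ⟨w, hw⟩ := h
      exact ⟨psi p N w, by rw [hπ, ← map_mul, ← hw, ha']⟩
    · right
      obtain ⟨w, hw⟩ := h
      exact ⟨psi p N w, by rw [hπ, ← map_mul, ← hw, hb']⟩

end Tower

section MaximalIdeals

/-- Two maximal ideals of `D` which, at every sufficiently deep level `n`, contain a common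
irreducible cyclotomic polynomial at that level, are equal. -/
lemma maximal_eq_of_levels {p : ℕ} (hp : p.Prime) {M M' : Ideal (LaurentUnion ℚ p)}
    (hM : M.IsMaximal) (hM' : M'.IsMaximal) (n₀ : ℕ)
    (h : ∀ n, n₀ ≤ n → ∃ m : ℕ, m ≠ 0 ∧
      Polynomial.toLaurent (Polynomial.cyclotomic m ℚ) ∈ Ideal.comap (psi p n).toRingHom M ∧
      Polynomial.toLaurent (Polynomial.cyclotomic m ℚ) ∈ Ideal.comap (psi p n).toRingHom M') :
    M = M' := by
  have hp0 : p ≠ 0 := hp.ne_zero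
  suffices hle : ∀ A B : Ideal (LaurentUnion ℚ p), A.IsMaximal → B.IsMaximal →
      (∀ n, n₀ ≤ n → ∃ m : ℕ, m ≠ 0 ∧
        Polynomial.toLaurent (Polynomial.cyclotomic m ℚ) ∈ Ideal.comap (psi p n).toRingHom A ∧
        Polynomial.toLaurent (Polynomial.cyclotomic m ℚ) ∈ Ideal.comap (psi p n).toRingHom B) →
      A ≤ B by
    refine le_antisymm (hle M M' hM hM' h) (hle M' M hM' hM fun n hn => ?_)
    obtain ⟨m, h1, h2, h3⟩ := h n hn
    exact ⟨m, h1, h3, h2⟩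
  intro A B hA hB hAB x hx
  obtain ⟨n1, hmem⟩ := exists_mem_psi_range hp0 x
  obtain ⟨y, hy⟩ := psi_range_mono hp0 (le_max_left n1 n₀) hmem
  obtain ⟨m, hm0, hmA, hmB⟩ := hAB (max n1 n₀) (le_max_right _ _)
  have hmax := span_toLaurent_cyclotomic_isMaximal hm0
  have hcomap : ∀ (C : Ideal (LaurentUnion ℚ p)), C.IsMaximal →
      Polynomial.toLaurent (Polynomial.cyclotomic m ℚ) ∈
        Ideal.comap (psi p (max n1 n₀)).toRingHom C →
      Ideal.comap (psi p (max n1 n₀)).toRingHom C =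
        Ideal.span {Polynomial.toLaurent (Polynomial.cyclotomic m ℚ)} := by
    intro C hC hmC
    refine (hmax.eq_of_le ?_ ?_).symm
    · intro htop
      have h1 : (1 : LaurentPolynomial ℚ) ∈ Ideal.comap (psi p (max n1 n₀)).toRingHom C := by
        rw [htop]; trivial
      rw [Ideal.mem_comap, map_one] at h1
      exact hC.ne_top ((Ideal.eq_top_iff_one _).mpr h1)
    · rw [Ideal.span_le, Set.singleton_subset_iff]
      exact hmC
  have hyA : y ∈ Ideal.comap (psi p (max n1 n₀)).toRingHom A := by
    rw [Ideal.mem_comap]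
    show psi p (max n1 n₀) y ∈ A
    rw [hy]
    exact hx
  rw [hcomap A hA hmA, ← hcomap B hB hmB] at hyA
  rw [Ideal.mem_comap] at hyA
  rw [← hy]
  exact hyA

end MaximalIdeals

/-- **Statement 10.** Let `p` be a prime and `D = ⋃_{n≥0} ℚ[X^{1/pⁿ}, X^{-1/pⁿ}]`.
For every `d ≥ 1`: (1) `p ∣ d` iff the `d`-th cyclotomic polynomial `Φ_d(X)` is a prime
element of `D`; (2) if `p ∤ d` then `Φ_d(X)` lies in countably infinitely many maximal
ideals of `D`. -/
theorem cyclotomic_prime_in_laurentUnion_iff (p : ℕ) (hp : p.Prime) (d : ℕ) (hd : 1 ≤ d) :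
    (p ∣ d ↔ Prime (Polynomial.aeval (XRoot ℚ p 0) (Polynomial.cyclotomic d ℚ))) ∧
    (¬ p ∣ d →
      {M : Ideal (LaurentUnion ℚ p) | M.IsMaximal ∧
        Polynomial.aeval (XRoot ℚ p 0) (Polynomial.cyclotomic d ℚ) ∈ M}.Countable ∧
      {M : Ideal (LaurentUnion ℚ p) | M.IsMaximal ∧
        Polynomial.aeval (XRoot ℚ p 0) (Polynomial.cyclotomic d ℚ) ∈ M}.Infinite) := by
  classical
  have hp0 : p ≠ 0 := hp.ne_zero
  have hd0 : d ≠ 0 := by omega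
  constructor
  · constructor
    · intro hpd
      exact prime_aeval_XRoot_cyclotomic hp hd0 hpd 0
    · intro hpr
      by_contra hpd
      have e1 := aeval_shift hp0 (Nat.zero_le 1) (Polynomial.cyclotomic d ℚ)
      simp only [Nat.sub_zero, pow_one] at e1
      have hfac : Polynomial.aeval (XRoot ℚ p 0) (Polynomial.cyclotomic d ℚ) =
          Polynomial.aeval (XRoot ℚ p 1) (Polynomial.cyclotomic (d * p) ℚ) *
          Polynomial.aeval (XRoot ℚ p 1) (Polynomial.cyclotomic d ℚ) := by
        rw [e1, Polynomial.cyclotomic_expand_eq_cyclotomic_mul hp hpd, map_mul]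
      have hdp0 : d * p ≠ 0 := mul_ne_zero hd0 hp0
      rcases hpr.2.2 (Polynomial.aeval (XRoot ℚ p 1) (Polynomial.cyclotomic (d * p) ℚ))
        (Polynomial.aeval (XRoot ℚ p 1) (Polynomial.cyclotomic d ℚ))
        ⟨1, by rw [← hfac, mul_one]⟩ with h | h
      · obtain ⟨c, hc⟩ := h
        have h1 : Polynomial.aeval (XRoot ℚ p 0) (Polynomial.cyclotomic d ℚ) * 1 =
            Polynomial.aeval (XRoot ℚ p 0) (Polynomial.cyclotomic d ℚ) *
            (c * Polynomial.aeval (XRoot ℚ p 1) (Polynomial.cyclotomic d ℚ)) := by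
          rw [mul_one]
          conv_lhs => rw [hfac, hc]
          ring
        have h2 := mul_left_cancel₀ hpr.1 h1
        have hB : IsUnit (Polynomial.aeval (XRoot ℚ p 1) (Polynomial.cyclotomic d ℚ)) :=
          IsUnit.of_mul_eq_one c (by rw [mul_comm]; exact h2.symm)
        exact not_isUnit_aeval_XRoot hp (coeff_zero_cyclotomic_ne hd0)
          (natDegree_cyclotomic_pos hd0) 1 hB
      · obtain ⟨c, hc⟩ := h
        have h1 : Polynomial.aeval (XRoot ℚ p 0) (Polynomial.cyclotomic d ℚ) * 1 =
            Polynomial.aeval (XRoot ℚ p 0) (Polynomial.cyclotomic d ℚ) *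
            (c * Polynomial.aeval (XRoot ℚ p 1) (Polynomial.cyclotomic (d * p) ℚ)) := by
          rw [mul_one]
          conv_lhs => rw [hfac, hc]
          ring
        have h2 := mul_left_cancel₀ hpr.1 h1
        have hA : IsUnit (Polynomial.aeval (XRoot ℚ p 1) (Polynomial.cyclotomic (d * p) ℚ)) :=
          IsUnit.of_mul_eq_one c (by rw [mul_comm]; exact h2.symm)
        exact not_isUnit_aeval_XRoot hp (coeff_zero_cyclotomic_ne hdp0)
          (natDegree_cyclotomic_pos hdp0) 1 hA
  · intro hpd
    set Φ := Polynomial.aeval (XRoot ℚ p 0) (Polynomial.cyclotomic d ℚ) with hΦdef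
    set Q : ℕ → LaurentUnion ℚ p :=
      fun i => Polynomial.aeval (XRoot ℚ p (i + 1)) (Polynomial.cyclotomic (d * p) ℚ) with hQdef
    have hdp0 : d * p ≠ 0 := mul_ne_zero hd0 hp0
    have hQrep : ∀ i n, i + 1 ≤ n →
        Q i = Polynomial.aeval (XRoot ℚ p n) (Polynomial.cyclotomic (d * p ^ (n - i)) ℚ) := by
      intro i n hin
      rw [hQdef]
      simp only
      rw [aeval_shift hp0 hin, expand_pow_cyclotomic hp (dvd_mul_left p d)]
      have hexp : d * p * p ^ (n - (i + 1)) = d * p ^ (n - i) := by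
        have h3 : n - (i + 1) + 1 = n - i := by omega
        rw [mul_assoc, ← pow_succ', h3]
      rw [hexp]
    have hQprime : ∀ i, Prime (Q i) :=
      fun i => prime_aeval_XRoot_cyclotomic hp hdp0 (dvd_mul_left p d) (i + 1)
    have hQdvd : ∀ i, Q i ∣ Φ := by
      intro i
      have h1 : Polynomial.cyclotomic (d * p) ℚ ∣
          Polynomial.expand ℚ (p ^ (i + 1)) (Polynomial.cyclotomic d ℚ) := by
        rw [expand_pow_cyclotomic_prod hp hpd]
        have hmem1 : (1 : ℕ) ∈ Finset.range (i + 1 + 1) := by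
          simp
        have := Finset.dvd_prod_of_mem
          (fun k => Polynomial.cyclotomic (d * p ^ k) ℚ) hmem1
        simpa [pow_one] using this
      have h2 := _root_.map_dvd (Polynomial.aeval (XRoot ℚ p (i + 1))) h1
      have hΦrep := aeval_shift hp0 (Nat.zero_le (i + 1)) (Polynomial.cyclotomic d ℚ)
      simp only [Nat.sub_zero] at hΦrep
      rw [hΦdef, hΦrep]
      exact h2
    have hcaseA : ∀ i (M M' : Ideal (LaurentUnion ℚ p)), M.IsMaximal → M'.IsMaximal →
        Q i ∈ M → Q i ∈ M' → M = M' := by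
      intro i M M' hM hM' hQM hQM'
      apply maximal_eq_of_levels hp hM hM' (i + 1)
      intro n hn
      refine ⟨d * p ^ (n - i), mul_ne_zero hd0 (pow_ne_zero _ hp0), ?_, ?_⟩
      · rw [Ideal.mem_comap]
        show psi p n (Polynomial.toLaurent (Polynomial.cyclotomic (d * p ^ (n - i)) ℚ)) ∈ M
        rw [psi_toLaurent, ← hQrep i n hn]
        exact hQM
      · rw [Ideal.mem_comap]
        show psi p n (Polynomial.toLaurent (Polynomial.cyclotomic (d * p ^ (n - i)) ℚ)) ∈ M'
        rw [psi_toLaurent, ← hQrep i n hn]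
        exact hQM'
    have hcaseB : ∀ (M : Ideal (LaurentUnion ℚ p)), M.IsMaximal → Φ ∈ M → (∀ i, Q i ∉ M) →
        ∀ n, Polynomial.toLaurent (Polynomial.cyclotomic d ℚ) ∈
          Ideal.comap (psi p n).toRingHom M := by
      intro M hM hΦM hQnot n
      have hΦrep := aeval_shift hp0 (Nat.zero_le n) (Polynomial.cyclotomic d ℚ)
      simp only [Nat.sub_zero] at hΦrep
      have hΦn : Polynomial.toLaurent (Polynomial.expand ℚ (p ^ n) (Polynomial.cyclotomic d ℚ))
          ∈ Ideal.comap (psi p n).toRingHom M := by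
        rw [Ideal.mem_comap]
        show psi p n _ ∈ M
        rw [psi_toLaurent, ← hΦrep]
        exact hΦM
      rw [expand_pow_cyclotomic_prod hp hpd, map_prod] at hΦn
      haveI : M.IsPrime := hM.isPrime
      haveI : (Ideal.comap (psi p n).toRingHom M).IsPrime := Ideal.IsPrime.comap _
      obtain ⟨k, hkrange, hkmem⟩ := Ideal.IsPrime.prod_mem_iff.mp hΦn
      rcases Nat.eq_zero_or_pos k with rfl | hkpos
      · simpa [pow_zero, mul_one] using hkmem
      · exfalso
        have hk_le : k ≤ n := by
          have := Finset.mem_range.mp hkrange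
          omega
        apply hQnot (n - k)
        have h5 : Q (n - k) = Polynomial.aeval (XRoot ℚ p n)
            (Polynomial.cyclotomic (d * p ^ k) ℚ) := by
          rw [hQrep (n - k) n (by omega)]
          have h6 : n - (n - k) = k := by omega
          rw [h6]
        rw [h5, ← psi_toLaurent]
        exact Ideal.mem_comap.mp hkmem
    refine ⟨?_, ?_⟩
    · rw [← Set.countable_coe_iff]
      let f : ↥{M : Ideal (LaurentUnion ℚ p) | M.IsMaximal ∧ Φ ∈ M} → Option ℕ :=
        fun M => if h : ∃ i, Q i ∈ (M : Ideal (LaurentUnion ℚ p)) then some (Nat.find h) else none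
      have hinj : Function.Injective f := by
        intro M N hMN
        obtain ⟨hM1, hM2⟩ := M.2
        obtain ⟨hN1, hN2⟩ := N.2
        simp only [f] at hMN
        by_cases hM : ∃ i, Q i ∈ (M : Ideal (LaurentUnion ℚ p))
        · by_cases hN : ∃ i, Q i ∈ (N : Ideal (LaurentUnion ℚ p))
          · rw [dif_pos hM, dif_pos hN] at hMN
            have hfind : Nat.find hM = Nat.find hN := Option.some_injective _ hMN
            have hs1 := Nat.find_spec hM
            have hs2 := Nat.find_spec hN
            rw [← hfind] at hs2
            exact Subtype.ext (hcaseA (Nat.find hM) _ _ hM1 hN1 hs1 hs2)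
          · rw [dif_pos hM, dif_neg hN] at hMN
            exact absurd hMN (Option.some_ne_none _)
        · by_cases hN : ∃ i, Q i ∈ (N : Ideal (LaurentUnion ℚ p))
          · rw [dif_neg hM, dif_pos hN] at hMN
            exact absurd hMN.symm (Option.some_ne_none _)
          · push_neg at hM hN
            refine Subtype.ext (maximal_eq_of_levels hp hM1 hN1 0 fun n _ => ?_)
            exact ⟨d, hd0, hcaseB _ hM1 hM2 hM n, hcaseB _ hN1 hN2 hN n⟩
      exact hinj.countable
    · have hMex : ∀ i : ℕ, ∃ M : Ideal (LaurentUnion ℚ p), M.IsMaximal ∧ Ideal.span {Q i} ≤ M :=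
        fun i => Ideal.exists_le_maximal _ (Ideal.span_singleton_ne_top (hQprime i).not_unit)
      choose Mi hMimax hMile using hMex
      have hQiMem : ∀ i, Q i ∈ Mi i := fun i => hMile i (Ideal.subset_span rfl)
      apply Set.infinite_of_injective_forall_mem (f := Mi)
      · intro i j hij
        by_contra hne
        have hin : i + 1 ≤ max i j + 1 := by omega
        have hjn : j + 1 ≤ max i j + 1 := by omega
        have hne' : d * p ^ (max i j + 1 - i) ≠ d * p ^ (max i j + 1 - j) := by
          intro he
          apply hne
          have h7 := Nat.eq_of_mul_eq_mul_left (Nat.pos_of_ne_zero hd0) he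
          have h8 := Nat.pow_right_injective hp.two_le h7
          omega
        have hcop : IsCoprime (Q i) (Q j) := by
          rw [hQrep i _ hin, hQrep j _ hjn]
          exact (Polynomial.cyclotomic.isCoprime_rat hne').map _
        obtain ⟨u, v, huv⟩ := hcop
        have h1M : (1 : LaurentUnion ℚ p) ∈ Mi i := by
          rw [← huv]
          refine Ideal.add_mem _ (Ideal.mul_mem_left _ _ (hQiMem i)) ?_
          exact Ideal.mul_mem_left _ _ (hij ▸ hQiMem j)
        exact (hMimax i).ne_top ((Ideal.eq_top_iff_one _).mpr h1M)
      · intro i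
        refine ⟨hMimax i, ?_⟩
        obtain ⟨c, hc⟩ := hQdvd i
        show Φ ∈ Mi i
        rw [hc]
        exact Ideal.mul_mem_right _ _ (hQiMem i)
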